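/- Let G=(V,E) be an undirected unweighted graph with an s–t path p* and let Ĝ be its bidirected version with p* regarded as a directed path using forward arcs. If E' is an undirected Force Path Cut solution for (G,p*), then the arc set {(u,v),(v,u) : {u,v}∈E'} is a directed Force Path Cut solution for (Ĝ,p*). -/

import Mathlib

/-- `p` (a list of vertices) is a directed path from `s` to `t` in the directed graph
with arc set `A`: it starts at `s`, ends at `t`, consecutive vertices are joined by
arcs of `A`, and no vertex repeats.  Its length (number of arcs) is `p.length - 1`. -/
def IsDiPath {V : Type*} (A : Set (V × V)) (s t : V) (p : List V) : Prop :=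
  p.head? = some s ∧ p.getLast? = some t ∧
    p.Chain' (fun u v => (u, v) ∈ A) ∧ p.Nodup

/-- `E'` is a directed Force Path Cut solution for the directed graph with arc set `A`
(unit arc weights), terminals `s, t` and target directed path `p` (given by its vertex
list): `E'` consists of arcs of `A`, avoids the arcs of `p`, and after removing `E'`
the path `p` is strictly shorter than every other directed `s`–`t` path. -/
def DiFPCSol {V : Type*} (A : Set (V × V)) (s t : V) (p : List V)
    (E' : Set (V × V)) : Prop :=
  E' ⊆ A ∧ (∀ a ∈ p.zip p.tail, a ∉ E') ∧
    ∀ q : List V, IsDiPath (A \ E') s t q → q ≠ p → p.length < q.length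

/-- `E'` is a Force Path Cut solution for the undirected graph `G` with unit edge
weights and target path `p`. -/
def FPCSol {V : Type*} (G : SimpleGraph V) {s t : V} (p : G.Walk s t)
    (E' : Set (Sym2 V)) : Prop :=
  E' ⊆ G.edgeSet ∧ (∀ e ∈ p.edges, e ∉ E') ∧
    ∀ q : (G.deleteEdges E').Walk s t, q.IsPath →
      q.mapLe (SimpleGraph.deleteEdges_le E') ≠ p → p.length < q.length

/-- The arc set of the bidirected version of the undirected graph `G`. -/
def biArcs {V : Type*} (G : SimpleGraph V) : Set (V × V) :=
  {a : V × V | G.Adj a.1 a.2}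


lemma walk_of_chain {V : Type*} (H : SimpleGraph V) :
    ∀ (q : List V) (s t : V), q.head? = some s → q.getLast? = some t →
      q.Chain' H.Adj → ∃ w : H.Walk s t, w.support = q
  | [], s, t, h, _, _ => by simp at h
  | [a], s, t, h1, h2, _ => by
      simp at h1 h2; subst h1; subst h2
      exact ⟨SimpleGraph.Walk.nil, rfl⟩
  | a :: b :: rest, s, t, h1, h2, hc => by
      simp at h1; subst h1
      simp only [List.Chain', List.isChain_cons_cons] at hc
      have h2' : (b :: rest).getLast? = some t := by
        rwa [List.getLast?_cons_cons] at h2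
      obtain ⟨w, hw⟩ := walk_of_chain H (b :: rest) b t rfl h2' hc.2
      exact ⟨SimpleGraph.Walk.cons hc.1 w, by simp [hw]⟩

lemma zip_mem_edges {V : Type*} {G : SimpleGraph V} {s t : V} (p : G.Walk s t) :
    ∀ a ∈ p.support.zip p.support.tail, Sym2.mk a.1 a.2 ∈ p.edges := by
  induction p with
  | nil => simp
  | cons h q ih =>
      rename_i u v w
      intro a ha
      rw [SimpleGraph.Walk.support_cons] at ha
      rw [SimpleGraph.Walk.edges_cons]
      rw [q.support_eq_cons] at ha
      simp only [List.tail_cons, List.zip_cons_cons, List.mem_cons] at ha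
      rcases ha with rfl | ha
      · simp
      · right
        exact ih a (by rw [q.support_eq_cons]; exact ha)

/-- If `E'` is an undirected Force Path Cut solution for `(G, p*)`,
then the arc set `{(u,v), (v,u) : {u,v} ∈ E'}` is a directed Force Path Cut solution
for the bidirected version of `G` with target directed path `p*`. -/
theorem stmt10 {V : Type*} (G : SimpleGraph V) (s t : V) (hst : s ≠ t)
    (pstar : G.Walk s t) (hpstar : pstar.IsPath)
    (E' : Set (Sym2 V)) (hsol : FPCSol G pstar E') :
    DiFPCSol (biArcs G) s t pstar.support {a : V × V | Sym2.mk a.1 a.2 ∈ E'} := by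

  obtain ⟨hE1, hE2, hE3⟩ := hsol
  refine ⟨?_, ?_, ?_⟩
  · intro a ha
    exact (G.mem_edgeSet).mp (hE1 ha)
  · intro a ha ha'
    exact hE2 _ (zip_mem_edges pstar a ha) ha'
  · intro q ⟨hq1, hq2, hq3, hq4⟩ hqne
    have hc : q.Chain' (G.deleteEdges E').Adj := by
      refine hq3.imp ?_
      intro u v huv
      rw [SimpleGraph.deleteEdges_adj]
      exact ⟨huv.1, huv.2⟩
    obtain ⟨w, hw⟩ := walk_of_chain (G.deleteEdges E') q s t hq1 hq2 hc
    have hwpath : w.IsPath := by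
      rw [SimpleGraph.Walk.isPath_def, hw]; exact hq4
    have hne : w.mapLe (SimpleGraph.deleteEdges_le E') ≠ pstar := by
      intro h
      apply hqne
      have hsup : (w.mapLe (SimpleGraph.deleteEdges_le E')).support = pstar.support :=
        congrArg SimpleGraph.Walk.support h
      rw [SimpleGraph.Walk.mapLe, SimpleGraph.Walk.support_map, hw] at hsup
      have hid : List.map (⇑(SimpleGraph.Hom.ofLE
          (SimpleGraph.deleteEdges_le (G := G) E'))) q = q := List.map_id'' (fun _ => rfl) q
      rw [hid] at hsup
      exact hsup
    have := hE3 w hwpath hne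
    have hql : q.length = w.length + 1 := by
      rw [← hw, SimpleGraph.Walk.length_support]
    rw [hql, SimpleGraph.Walk.length_support]
    omega
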